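/- Let H be a Hilbert space, T : H → H a bounded linear operator, and c > 0 a constant such that ‖(I − T)x‖² ≤ c(‖x‖² − ‖Tx‖²) for all x ∈ H. Then T is non-expansive (‖T‖ ≤ 1) and asymptotically regular (for every x₀ ∈ H, ‖T^{k+1}x₀ − T^k x₀‖ → 0 as k → ∞). -/

import Mathlib

open Filter

/-- If `‖(I - T)x‖² ≤ c(‖x‖² - ‖Tx‖²)` for all `x`, then `T` is non-expansive
and asymptotically regular. -/
theorem stmt_2 {𝕜 H : Type*} [RCLike 𝕜] [NormedAddCommGroup H] [InnerProductSpace 𝕜 H]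
    [CompleteSpace H] (T : H →L[𝕜] H) (c : ℝ) (hc : 0 < c)
    (h : ∀ x : H, ‖x - T x‖ ^ 2 ≤ c * (‖x‖ ^ 2 - ‖T x‖ ^ 2)) :
    ‖T‖ ≤ 1 ∧
      ∀ x₀ : H, Tendsto (fun k : ℕ => ‖(T ^ (k + 1)) x₀ - (T ^ k) x₀‖) atTop (nhds 0) := by
  have hTx : ∀ x : H, ‖T x‖ ≤ ‖x‖ := by
    intro x
    have h1 := h x
    have h2 : (0:ℝ) ≤ ‖x - T x‖ ^ 2 := sq_nonneg _
    have h3 : 0 ≤ ‖x‖ ^ 2 - ‖T x‖ ^ 2 := nonneg_of_mul_nonneg_right (h2.trans h1) hc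
    have h4 : ‖T x‖ ^ 2 ≤ ‖x‖ ^ 2 := by linarith
    exact (pow_le_pow_iff_left₀ (norm_nonneg _) (norm_nonneg _) two_ne_zero).mp h4
  constructor
  · exact ContinuousLinearMap.opNorm_le_bound T zero_le_one (by simpa using hTx)
  · intro x₀
    set a : ℕ → ℝ := fun k => ‖(T ^ k) x₀‖ ^ 2 with ha
    have hiter : ∀ k : ℕ, (T ^ (k + 1)) x₀ = T ((T ^ k) x₀) := by
      intro k
      rw [pow_succ']
      rfl
    have hanti : Antitone a := by
      apply antitone_nat_of_succ_le
      intro k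
      have := hTx ((T ^ k) x₀)
      simp only [ha, hiter k]
      exact pow_le_pow_left₀ (norm_nonneg _) this 2
    have hbdd : ∀ k, 0 ≤ a k := fun k => sq_nonneg _
    obtain ⟨L, hL⟩ : ∃ L, Tendsto a atTop (nhds L) :=
      ⟨_, tendsto_atTop_ciInf hanti ⟨0, fun y ⟨k, hk⟩ => hk ▸ hbdd k⟩⟩
    have hdiff : Tendsto (fun k => c * (a k - a (k + 1))) atTop (nhds 0) := by
      have : Tendsto (fun k => a k - a (k + 1)) atTop (nhds (L - L)) :=
        hL.sub (hL.comp (tendsto_add_atTop_nat 1))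
      simpa using this.const_mul c
    have hsq : Tendsto (fun k => ‖(T ^ (k + 1)) x₀ - (T ^ k) x₀‖ ^ 2) atTop (nhds 0) := by
      apply squeeze_zero (fun k => sq_nonneg _) _ hdiff
      intro k
      have := h ((T ^ k) x₀)
      rw [hiter k]
      calc ‖T ((T ^ k) x₀) - (T ^ k) x₀‖ ^ 2
          = ‖(T ^ k) x₀ - T ((T ^ k) x₀)‖ ^ 2 := by rw [norm_sub_rev]
        _ ≤ c * (a k - a (k + 1)) := by
            simpa only [ha, hiter k] using this
    have := hsq.sqrt
    simpa [Real.sqrt_sq (norm_nonneg _)] using this
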